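/- Let L be a bounded operator and P an orthogonal projection on a Hilbert space with LP = PL = P and ‖L(1-P)‖ < 1. Then for every vector φ, ⟨φ,(1-P)φ⟩ ≤ (1 - ‖L(1-P)‖²)⁻¹ · (‖φ‖² - ‖Lφ‖²). -/

import Mathlib

/-- For a contraction `L` and orthogonal projection `P` with `LP = PL = P`
and `‖L(1-P)‖ < 1`, for every `φ`,
`⟨φ,(1-P)φ⟩ ≤ (1 - ‖L(1-P)‖²)⁻¹ (‖φ‖² - ‖Lφ‖²)`. -/
theorem stmt_6 {H : Type*} [NormedAddCommGroup H] [InnerProductSpace ℂ H] [CompleteSpace H]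
    (L P : H →L[ℂ] H) (hL : ‖L‖ ≤ 1)
    (hP : IsSelfAdjoint P) (hPidem : P * P = P)
    (h1 : L * P = P) (h2 : P * L = P)
    (hcontr : ‖L * (1 - P)‖ < 1) :
    ∀ φ : H, (1 - P).reApplyInnerSelf φ ≤
      (1 - ‖L * (1 - P)‖ ^ 2)⁻¹ * (‖φ‖ ^ 2 - ‖L φ‖ ^ 2) := by
  intro φ
  set k := ‖L * (1 - P)‖ with hk
  have hk0 : 0 ≤ k := norm_nonneg _
  have hkk : (0:ℝ) < 1 - k ^ 2 := by nlinarith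
  have hsym := hP.isSymmetric
  have hPLQ : (P * (L * (1 - P)) : H →L[ℂ] H) = 0 := by
    rw [← mul_assoc, h2]; simp [mul_sub, hPidem]
  have hPQ : (P * (1 - P) : H →L[ℂ] H) = 0 := by
    simp [mul_sub, hPidem]
  have hφ : φ = P φ + (1 - P) φ := by simp
  have hLφ : L φ = P φ + (L * (1 - P)) φ := by
    have h1' : L (P φ) = P φ := by
      have := congrArg (fun T : H →L[ℂ] H => T φ) h1
      simpa using this
    simp only [ContinuousLinearMap.mul_apply, ContinuousLinearMap.sub_apply,
      ContinuousLinearMap.one_apply, map_sub, h1']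
    abel
  have hPQ0 : P ((1 - P) φ) = 0 := by
    have := congrArg (fun T : H →L[ℂ] H => T φ) hPQ
    simpa using this
  have hPLQ0 : P ((L * (1 - P)) φ) = 0 := by
    have := congrArg (fun T : H →L[ℂ] H => T φ) hPLQ
    simpa using this
  have o1 : (inner ℂ (P φ) ((1 - P) φ) : ℂ) = 0 := by
    have h : (inner ℂ (P φ) ((1 - P) φ) : ℂ) = inner ℂ φ (P ((1 - P) φ)) := hsym φ _
    rw [h, hPQ0, inner_zero_right]
  have o2 : (inner ℂ (P φ) ((L * (1 - P)) φ) : ℂ) = 0 := by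
    have h : (inner ℂ (P φ) ((L * (1 - P)) φ) : ℂ) = inner ℂ φ (P ((L * (1 - P)) φ)) := hsym φ _
    rw [h, hPLQ0, inner_zero_right]
  have n1 : ‖φ‖ ^ 2 = ‖P φ‖ ^ 2 + ‖(1 - P) φ‖ ^ 2 := by
    conv_lhs => rw [hφ]
    rw [@norm_add_sq ℂ, o1]
    simp
  have n2 : ‖L φ‖ ^ 2 = ‖P φ‖ ^ 2 + ‖(L * (1 - P)) φ‖ ^ 2 := by
    conv_lhs => rw [hLφ]
    rw [@norm_add_sq ℂ, o2]
    simp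
  have hQidem : (1 - P) ((1 - P) φ) = (1 - P) φ := by
    have : ((1 - P) * (1 - P) : H →L[ℂ] H) = 1 - P := by
      simp [sub_mul, mul_sub, hPidem]
    have := congrArg (fun T : H →L[ℂ] H => T φ) this
    simpa using this
  have hbound : ‖(L * (1 - P)) φ‖ ≤ k * ‖(1 - P) φ‖ := by
    have : (L * (1 - P)) φ = (L * (1 - P)) ((1 - P) φ) := by
      simp only [ContinuousLinearMap.mul_apply, hQidem]
    rw [this]
    exact (L * (1 - P)).le_opNorm ((1 - P) φ)
  have hQsa : IsSelfAdjoint (1 - P : H →L[ℂ] H) := (IsSelfAdjoint.one _).sub hP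
  have hQsym := hQsa.isSymmetric
  have hre : (1 - P).reApplyInnerSelf φ = ‖(1 - P) φ‖ ^ 2 := by
    have h1' : (inner ℂ ((1 - P) ((1 - P) φ)) φ : ℂ) = inner ℂ ((1 - P) φ) ((1 - P) φ) := hQsym _ _
    rw [hQidem] at h1'
    unfold ContinuousLinearMap.reApplyInnerSelf
    rw [h1', inner_self_eq_norm_sq]
  rw [hre, inv_mul_eq_div, le_div_iff₀ hkk, n1, n2]
  nlinarith [hbound, norm_nonneg ((L * (1 - P)) φ), norm_nonneg ((1 - P) φ)]
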